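/- For all n ≥ 3, the only subspaces of F_2^n stable under the natural coordinate-permutation action of the alternating group A_n are the zero subspace, F_2^n, the span of the all-ones vector, and V_E = { v : |supp(v)| even }. -/
import Mathlib

open Finset

namespace Stmt5Aux

variable {n : ℕ}

/-- the "pair vector" with support `{p, q}` (when `p ≠ q`). -/
def pv (p q : Fin n) : Fin n → ZMod 2 := fun x => if x = p ∨ x = q then 1 else 0

lemma zmod2_cases (a : ZMod 2) : a = 0 ∨ a = 1 := by revert a; decide

lemma zmod2_add_eq_zero {a b : ZMod 2} (h : a + b = 0) : a = b := by
  revert a b; decide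

lemma sum_eq_card (v : Fin n → ZMod 2) :
    ∑ i, v i = ((Finset.univ.filter fun i => v i ≠ 0).card : ZMod 2) := by
  classical
  rw [← Finset.sum_filter_ne_zero Finset.univ, Finset.card_eq_sum_ones, Nat.cast_sum]
  refine Finset.sum_congr rfl fun i hi => ?_
  have h := (Finset.mem_filter.mp hi).2
  rcases zmod2_cases (v i) with h0 | h1
  · exact absurd h0 h
  · simp [h1]

lemma sum_zero_iff_even (v : Fin n → ZMod 2) :
    (∑ i, v i) = 0 ↔ Even (Finset.univ.filter fun i => v i ≠ 0).card := by
  rw [sum_eq_card, ZMod.natCast_eq_zero_iff]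
  simp [Nat.even_iff, Nat.dvd_iff_mod_eq_zero]

lemma pv_comm (p q : Fin n) : pv p q = pv q p := by
  funext x; simp [pv, or_comm]

lemma pv_comp (σ : Equiv.Perm (Fin n)) {p q a b : Fin n}
    (ha : σ a = p) (hb : σ b = q) :
    (fun x => pv p q (σ x)) = pv a b := by
  funext x
  have h1 : σ x = p ↔ x = a := by rw [← ha]; exact σ.apply_eq_iff_eq
  have h2 : σ x = q ↔ x = b := by rw [← hb]; exact σ.apply_eq_iff_eq
  simp [pv, h1, h2]

end Stmt5Aux

open Stmt5Aux

theorem stmt5 (n : ℕ) (hn : 3 ≤ n) (W : Submodule (ZMod 2) (Fin n → ZMod 2))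
    (hW : ∀ σ ∈ alternatingGroup (Fin n), ∀ v ∈ W, (fun i => v (σ i)) ∈ W) :
    W = ⊥ ∨ W = ⊤ ∨ W = Submodule.span (ZMod 2) {fun _ => 1} ∨
      (W : Set (Fin n → ZMod 2)) =
        {v | Even (Finset.univ.filter fun i => v i ≠ 0).card} := by
  classical
  by_cases hx : ∃ v ∈ W, v ≠ 0 ∧ v ≠ fun _ => 1
  · -- W contains a vector that is neither 0 nor all-ones.
    obtain ⟨v, hv, hv0, hv1⟩ := hx
    -- find coordinates i (value 1), j (value 0), and a third point k
    have hexj : ∃ j, v j = 0 := by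
      by_contra h
      push_neg at h
      exact hv1 (funext fun j => (zmod2_cases (v j)).resolve_left (h j))
    have hexi : ∃ i, v i = 1 := by
      by_contra h
      push_neg at h
      exact hv0 (funext fun i => (zmod2_cases (v i)).resolve_right (h i))
    obtain ⟨j, hj⟩ := hexj
    obtain ⟨i, hi⟩ := hexi
    have hij : i ≠ j := by
      intro h; rw [h, hj] at hi; exact one_ne_zero hi.symm
    have hexk : ∃ k, k ≠ i ∧ k ≠ j := by
      by_contra h
      push_neg at h
      have hsub : (Finset.univ : Finset (Fin n)) ⊆ {i, j} := by
        intro x _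
        rcases eq_or_ne x i with h1 | h1
        · simp [h1]
        · simp [h x h1]
      have := Finset.card_le_card hsub
      simp only [Finset.card_fin] at this
      have h2 : ({i, j} : Finset (Fin n)).card ≤ 2 := by
        apply le_trans (Finset.card_insert_le _ _)
        simp
      omega
    obtain ⟨k, hki, hkj⟩ := hexk
    -- step 1 : W contains some pair vector
    have key : ∃ p q : Fin n, p ≠ q ∧ pv p q ∈ W := by
      set σ : Equiv.Perm (Fin n) := Equiv.swap i j * Equiv.swap i k with hσdef
      have hσ : σ ∈ alternatingGroup (Fin n) := by
        rw [Equiv.Perm.mem_alternatingGroup, hσdef, map_mul,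
          Equiv.Perm.sign_swap hij, Equiv.Perm.sign_swap (Ne.symm hki)]
        decide
      have hw : v + (fun x => v (σ x)) ∈ W := W.add_mem hv (hW σ hσ v hv)
      have hσi : σ i = k := by
        rw [hσdef, Equiv.Perm.mul_apply, Equiv.swap_apply_left,
          Equiv.swap_apply_of_ne_of_ne hki hkj]
      have hσj : σ j = i := by
        rw [hσdef, Equiv.Perm.mul_apply,
          Equiv.swap_apply_of_ne_of_ne (Ne.symm hij) (Ne.symm hkj),
          Equiv.swap_apply_right]
      have hσk : σ k = j := by
        rw [hσdef, Equiv.Perm.mul_apply, Equiv.swap_apply_right,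
          Equiv.swap_apply_left]
      have hσx : ∀ x, x ≠ i → x ≠ j → x ≠ k → σ x = x := by
        intro x h1 h2 h3
        rw [hσdef, Equiv.Perm.mul_apply,
          Equiv.swap_apply_of_ne_of_ne h1 h3,
          Equiv.swap_apply_of_ne_of_ne h1 h2]
      rcases zmod2_cases (v k) with hc | hc
      · refine ⟨i, j, hij, ?_⟩
        have : pv i j = v + (fun x => v (σ x)) := by
          funext x
          rcases eq_or_ne x i with h1 | h1
          · subst h1; simp [pv, hσi, hi, hc]
          rcases eq_or_ne x j with h2 | h2
          · subst h2; simp [pv, hσj, hi, hj, Ne.symm hij]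
          rcases eq_or_ne x k with h3 | h3
          · subst h3; simp [pv, hσk, hj, hc, hki, hkj]
          · simp [pv, hσx x h1 h2 h3, h1, h2, CharTwo.add_self_eq_zero]
        rw [this]; exact hw
      · refine ⟨j, k, fun h => hkj h.symm, ?_⟩
        have : pv j k = v + (fun x => v (σ x)) := by
          funext x
          rcases eq_or_ne x i with h1 | h1
          · subst h1; simp [pv, hσi, hi, hc, hij, Ne.symm hki,
              CharTwo.add_self_eq_zero]
          rcases eq_or_ne x j with h2 | h2
          · subst h2; simp [pv, hσj, hi, hj]
          rcases eq_or_ne x k with h3 | h3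
          · subst h3; simp [pv, hσk, hj, hc]
          · simp [pv, hσx x h1 h2 h3, h2, h3, CharTwo.add_self_eq_zero]
        rw [this]; exact hw
    obtain ⟨p, q, hpq, hpv⟩ := key
    -- step 2 : W contains all pair vectors
    have all_pairs : ∀ a b : Fin n, a ≠ b → pv a b ∈ W := by
      intro a b hab
      set b' : Fin n := Equiv.swap p a b with hb'def
      have hb'p : b' ≠ p := by
        intro h
        exact hab ((Equiv.swap p a).injective
          (h.trans (Equiv.swap_apply_right p a).symm)).symm
      set σ0 : Equiv.Perm (Fin n) := Equiv.swap q b' * Equiv.swap p a with hσ0def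
      have hσ0a : σ0 a = p := by
        simp [hσ0def, Equiv.swap_apply_right,
          Equiv.swap_apply_of_ne_of_ne hpq (Ne.symm hb'p)]
      have hσ0b : σ0 b = q := by
        simp [hσ0def, ← hb'def, Equiv.swap_apply_left]
      rcases Int.units_eq_one_or (Equiv.Perm.sign σ0) with hs | hs
      · have hσmem : σ0 ∈ alternatingGroup (Fin n) :=
          Equiv.Perm.mem_alternatingGroup.mpr hs
        have := hW σ0 hσmem (pv p q) hpv
        rwa [pv_comp σ0 hσ0a hσ0b] at this
      · set σ1 : Equiv.Perm (Fin n) := σ0 * Equiv.swap a b with hσ1def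
        have hσmem : σ1 ∈ alternatingGroup (Fin n) := by
          rw [Equiv.Perm.mem_alternatingGroup, hσ1def, map_mul, hs,
            Equiv.Perm.sign_swap hab]
          decide
        have hσ1a : σ1 a = q := by
          simp [hσ1def, Equiv.swap_apply_left, hσ0b]
        have hσ1b : σ1 b = p := by
          simp [hσ1def, Equiv.swap_apply_right, hσ0a]
        have := hW σ1 hσmem (pv p q) hpv
        rw [show (fun x => pv p q (σ1 x)) = fun x => pv q p (σ1 x) by
          rw [pv_comm]] at this
        rwa [pv_comp σ1 hσ1a hσ1b] at this
    -- step 3 : the even-weight code is contained in W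
    obtain ⟨i0⟩ : Nonempty (Fin n) := ⟨⟨0, by omega⟩⟩
    have hE : ∀ u : Fin n → ZMod 2, (∑ i, u i) = 0 → u ∈ W := by
      intro u hu
      have hrepr : u = ∑ i, u i • (if i = i0 then 0 else pv i i0) := by
        funext x
        rw [Finset.sum_apply]
        rcases eq_or_ne x i0 with hx | hx
        · rw [hx]
          have hterm : ∀ i ∈ Finset.univ,
              (u i • (if i = i0 then (0 : Fin n → ZMod 2) else pv i i0)) i0
                = u i + (if i = i0 then u i else 0) := by
            intro i _
            rcases eq_or_ne i i0 with h | h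
            · simp [h, CharTwo.add_self_eq_zero]
            · simp [h, pv]
          rw [Finset.sum_congr rfl hterm, Finset.sum_add_distrib, hu,
            Finset.sum_ite_eq' Finset.univ i0 u]
          simp
        · have hterm : ∀ i ∈ Finset.univ,
              (u i • (if i = i0 then (0 : Fin n → ZMod 2) else pv i i0)) x
                = (if i = x then u x else 0) := by
            intro i _
            rcases eq_or_ne i i0 with h | h
            · simp [h, Ne.symm hx]
            · rcases eq_or_ne i x with h2 | h2
              · subst h2; simp [h, pv]
              · simp [h, h2, pv, Ne.symm h2, hx]
          rw [Finset.sum_congr rfl hterm, Finset.sum_ite_eq' Finset.univ x]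
          simp
      rw [hrepr]
      refine Submodule.sum_mem _ fun i _ => ?_
      rcases eq_or_ne i i0 with h | h
      · simp [h]
      · rw [if_neg h]
        exact W.smul_mem _ (all_pairs i i0 h)
    -- conclude : W = even code or W = ⊤
    by_cases hT : ∀ w ∈ W, (∑ i, w i) = 0
    · right; right; right
      ext u
      simp only [SetLike.mem_coe, Set.mem_setOf_eq]
      constructor
      · intro hu
        exact (sum_zero_iff_even u).mp (hT u hu)
      · intro hu
        exact hE u ((sum_zero_iff_even u).mpr hu)
    · right; left
      push_neg at hT
      obtain ⟨w, hw, hws⟩ := hT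
      rw [Submodule.eq_top_iff']
      intro u
      set s : ZMod 2 := ∑ i, u i with hs
      have h1 : u + s • w ∈ W := by
        apply hE
        have : ∑ i, (u + s • w) i = (∑ i, u i) + s * ∑ i, w i := by
          simp [Finset.sum_add_distrib, Finset.mul_sum]
        rw [this, ← hs]
        have hws1 : (∑ i, w i) = 1 := (zmod2_cases _).resolve_left hws
        rw [hws1, mul_one, CharTwo.add_self_eq_zero]
      have h2 : u = (u + s • w) + s • w := by
        rw [add_assoc, ← two_smul (ZMod 2) (s • w)]
        simp [show (2 : ZMod 2) = 0 from rfl]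
      rw [h2]
      exact W.add_mem h1 (W.smul_mem s hw)
  · -- every element of W is 0 or the all-ones vector
    push_neg at hx
    by_cases hb : W = ⊥
    · left; exact hb
    · right; right; left
      obtain ⟨v, hv, hv0⟩ := (Submodule.ne_bot_iff W).mp hb
      have hv1 : v = fun _ => 1 := by
        by_contra h
        exact h (hx v hv hv0)
      apply le_antisymm
      · intro w hw
        rcases eq_or_ne w 0 with h | h
        · rw [h]; exact Submodule.zero_mem _
        · rw [hx w hw h]
          exact Submodule.subset_span rfl
      · rw [Submodule.span_le]
        intro x hxx
        rw [Set.mem_singleton_iff] at hxx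
        rw [hxx, ← hv1]
        exact hv
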